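/- Let f : ℝⁿ → ℝ be convex and differentiable, x* a minimizer of f, p > 0, C > 0, ζ ≥ 1, and let X : (0,∞) → ℝⁿ be twice differentiable satisfying X''(t) + ((ζp+1)/t)·X'(t) + C·p²·t^(p-2)·∇f(X(t)) = 0. Define E(t) = C·t^p·(f(X(t)) − f(x*)) + ((ζ−1)/2)·‖x* − X(t)‖² + (1/2)·‖(t/p)·X'(t) + X(t) − x*‖². Then E'(t) ≤ 0 for all t > 0. -/

import Mathlib

open Real Set

local notation "⟪" x ", " y "⟫" => @inner ℝ _ _ x y

lemma grad_convex_ineq {n : ℕ} (f : EuclideanSpace ℝ (Fin n) → ℝ)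
    (hf : Differentiable ℝ f) (hconv : ConvexOn ℝ Set.univ f)
    (x y : EuclideanSpace ℝ (Fin n)) :
    ⟪gradient f x, y - x⟫ ≤ f y - f x := by
  set g : ℝ → ℝ := fun s => f (s • (y - x) + x) with hgdef
  have hgd : HasDerivAt g ⟪gradient f x, y - x⟫ 0 := by
    have hcurve : HasDerivAt (fun s : ℝ => s • (y - x) + x) (y - x) 0 := by
      simpa using ((hasDerivAt_id (0:ℝ)).smul_const (y - x)).add_const x
    have h0 : HasFDerivAt f (InnerProductSpace.toDual ℝ _ (gradient f x))
        ((0:ℝ) • (y - x) + x) := by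
      simpa using (hf x).hasGradientAt.hasFDerivAt
    simpa [InnerProductSpace.toDual_apply_apply, Function.comp_def] using h0.comp_hasDerivAt 0 hcurve
  have hgc : ConvexOn ℝ Set.univ g := by
    have h := hconv.comp_affineMap (AffineMap.lineMap x y)
    simpa [Function.comp_def, AffineMap.lineMap_apply, hgdef] using h
  have h := hgc.le_slope_of_hasDerivAt (mem_univ (0:ℝ)) (mem_univ 1) one_pos hgd
  rw [slope_def_field] at h
  simpa [hgdef] using h

/-- Monotonicity of the Lyapunov function for the convex p-Bregman flow in ℝⁿ. -/
theorem lyapunov_decreasing_convex {n : ℕ}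
    (f : EuclideanSpace ℝ (Fin n) → ℝ) (hf : Differentiable ℝ f)
    (hconv : ConvexOn ℝ Set.univ f)
    (xstar : EuclideanSpace ℝ (Fin n)) (hmin : ∀ y, f xstar ≤ f y)
    (p C ζ : ℝ) (hp : 0 < p) (hC : 0 < C) (hζ : 1 ≤ ζ)
    (X X' X'' : ℝ → EuclideanSpace ℝ (Fin n))
    (hX : ∀ t > (0:ℝ), HasDerivAt X (X' t) t)
    (hX' : ∀ t > (0:ℝ), HasDerivAt X' (X'' t) t)
    (hode : ∀ t > (0:ℝ),
      X'' t + ((ζ * p + 1) / t) • X' t + (C * p ^ 2 * t ^ (p - 2)) • gradient f (X t) = 0) :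
    ∀ t > (0:ℝ), ∀ d : ℝ,
      HasDerivAt (fun s => C * s ^ p * (f (X s) - f xstar)
          + ((ζ - 1) / 2) * ‖xstar - X s‖ ^ 2
          + (1/2) * ‖(s / p) • X' s + X s - xstar‖ ^ 2) d t →
      d ≤ 0 := by
  intro t ht d hd
  -- build the derivative explicitly
  have h1 : HasDerivAt (fun s : ℝ => s ^ p) (p * t ^ (p-1)) t :=
    Real.hasDerivAt_rpow_const (Or.inl (ne_of_gt ht))
  have hfX : HasDerivAt (fun s => f (X s)) ⟪gradient f (X t), X' t⟫ t := by
    have h0 : HasFDerivAt f (InnerProductSpace.toDual ℝ _ (gradient f (X t))) (X t) :=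
      (hf (X t)).hasGradientAt.hasFDerivAt
    simpa [InnerProductSpace.toDual_apply_apply, Function.comp_def] using h0.comp_hasDerivAt t (hX t ht)
  have term1 := ((h1.const_mul C).mul (hfX.sub_const (f xstar)))
  have term2 := (((hasDerivAt_const t xstar).sub (hX t ht)).norm_sq).const_mul ((ζ - 1)/2)
  have hc : HasDerivAt (fun s : ℝ => s / p) (1/p) t := by
    simpa using (hasDerivAt_id t).div_const p
  have term3 := ((((hc.smul (hX' t ht)).add (hX t ht)).sub_const xstar).norm_sq).const_mul (1/2 : ℝ)
  have hE := (term1.add term2).add term3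
  have hdval := hd.unique hE
  -- rewrite X'' via the ODE
  have hX''eq : X'' t = -(((ζ * p + 1) / t) • X' t)
      - (C * p ^ 2 * t ^ (p - 2)) • gradient f (X t) := by
    have h := hode t ht
    rw [show X'' t + ((ζ * p + 1) / t) • X' t + (C * p ^ 2 * t ^ (p - 2)) • gradient f (X t)
        = X'' t - (-(((ζ * p + 1) / t) • X' t)
          - (C * p ^ 2 * t ^ (p - 2)) • gradient f (X t)) from by abel] at h
    exact sub_eq_zero.mp h
  rw [hX''eq] at hdval
  -- expand inner products
  simp only [inner_add_left, inner_add_right, inner_sub_left, inner_sub_right,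
    real_inner_smul_left, real_inner_smul_right, inner_neg_left, inner_neg_right,
    inner_zero_left, inner_zero_right, zero_sub, smul_smul, Pi.add_apply, Pi.sub_apply,
    Pi.smul_apply'] at hdval
  -- scalar abbreviations
  have hcomm1 : ⟪X t, X' t⟫ = ⟪X' t, X t⟫ := real_inner_comm _ _
  have hcomm2 : ⟪xstar, X' t⟫ = ⟪X' t, xstar⟫ := real_inner_comm _ _
  have hcomm3 : ⟪X t, gradient f (X t)⟫ = ⟪gradient f (X t), X t⟫ := real_inner_comm _ _
  have hcomm4 : ⟪xstar, gradient f (X t)⟫ = ⟪gradient f (X t), xstar⟫ := real_inner_comm _ _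
  have hcomm5 : ⟪X' t, gradient f (X t)⟫ = ⟪gradient f (X t), X' t⟫ := real_inner_comm _ _
  rw [hcomm1, hcomm2, hcomm3, hcomm4, hcomm5] at hdval
  set a := ⟪gradient f (X t), X' t⟫ with ha
  set b := ⟪gradient f (X t), X t⟫ with hb
  set c := ⟪gradient f (X t), xstar⟫ with hcv
  set m1 := ⟪X' t, X t⟫ with hm1
  set m2 := ⟪X' t, xstar⟫ with hm2
  set N := ⟪X' t, X' t⟫ with hN
  have hNpos : 0 ≤ N := real_inner_self_nonneg
  -- rpow relations
  have e1 : t ^ p = t ^ (p-2) * t * t := by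
    have h := Real.rpow_add ht (p-2) 2
    rw [show p - 2 + 2 = p by ring] at h
    rw [h, show (2:ℝ) = ((2:ℕ):ℝ) by norm_num, Real.rpow_natCast]; ring
  have e2 : t ^ (p-1) = t ^ (p-2) * t := by
    have h := Real.rpow_add ht (p-2) 1
    rw [show p - 2 + 1 = p - 1 by ring] at h
    rw [h, Real.rpow_one]
  rw [e1, e2] at hdval
  have hu : 0 < t ^ (p-2) := Real.rpow_pos_of_pos ht _
  set u := t ^ (p-2) with hudef
  -- the derivative equals the closed form
  have key : d = C * p * (u * t) * ((f (X t) - f xstar) - (b - c)) + ((1 - ζ) * t / p) * N := by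
    rw [hdval]
    field_simp
    ring
  -- convexity inequality
  have hgrad := grad_convex_ineq f hf hconv (X t) xstar
  have hbc : f (X t) - f xstar - (b - c) ≤ 0 := by
    have : c - b ≤ f xstar - f (X t) := by
      simpa [inner_sub_right, hb, hcv] using hgrad
    linarith
  rw [key]
  have h1' : C * p * (u * t) * ((f (X t) - f xstar) - (b - c)) ≤ 0 :=
    mul_nonpos_of_nonneg_of_nonpos (by positivity) hbc
  have h2' : ((1 - ζ) * t / p) * N ≤ 0 := by
    apply mul_nonpos_of_nonpos_of_nonneg _ hNpos
    have : (1 - ζ) ≤ 0 := by linarith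
    have := mul_nonpos_of_nonpos_of_nonneg (mul_nonpos_of_nonpos_of_nonneg this (le_of_lt ht)) (le_of_lt (inv_pos.mpr hp))
    simpa [div_eq_mul_inv] using this
  linarith
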